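/- Let g : ℤ → ℂ satisfy (m+n)·g(m) = (m−n)·g(m+n) + (m+n)·g(n) for all m,n ∈ ℤ, together with g(0) = 0 and g(−1) = 0. Then g(m) = (1/2)·(m² + m)·g(1) for all m ∈ ℤ. -/

import Mathlib

theorem stmt0 (g : ℤ → ℂ)
    (h : ∀ m n : ℤ, ((m : ℂ) + n) * g m = ((m : ℂ) - n) * g (m + n) + ((m : ℂ) + n) * g n)
    (h0 : g 0 = 0) (hm1 : g (-1) = 0) :
    ∀ m : ℤ, g m = (1/2 : ℂ) * ((m : ℂ)^2 + m) * g 1 := by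
  set f : ℤ → ℂ := fun m => g m - (1/2 : ℂ) * ((m:ℂ)^2 + m) * g 1 with hf
  have key : ∀ m : ℤ, ((m:ℂ)+1) * f m = ((m:ℂ)-1) * f (m+1) := by
    intro m
    have h1 := h m 1
    simp only [hf]
    push_cast
    push_cast at h1
    linear_combination h1
  have z0 : f 0 = 0 := by simp [hf, h0]
  have zm1 : f (-1) = 0 := by simp [hf, hm1]
  have z1 : f 1 = 0 := by simp [hf]; ring
  have z2 : f 2 = 0 := by
    have e1 := h 2 1
    have e2 := h (-1) 3
    simp only [hf]
    push_cast at e1 e2 ⊢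
    linear_combination e1 - (1/2 : ℂ) * e2 + hm1
  have z : ∀ m : ℤ, f m = 0 := by
    intro m
    induction m using Int.induction_on with
    | zero => exact z0
    | succ k ih =>
      rcases Nat.lt_or_ge k 2 with hk | hk
      · interval_cases k
        · exact z1
        · exact z2
      · have hk1 : ((k:ℤ):ℂ) - 1 ≠ 0 := by
          have : ((k:ℤ):ℂ) ≠ 1 := by
            exact_mod_cast (by omega : (k:ℤ) ≠ 1)
          intro hc
          exact this (by linear_combination hc)
        have := key (k:ℤ)
        rw [ih, mul_zero] at this
        have := (mul_eq_zero.mp this.symm).resolve_left hk1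
        exact this
    | pred k ih =>
      rcases Nat.eq_zero_or_pos k with hk | hk
      · subst hk; simpa using zm1
      · have := key (-(k:ℤ) - 1)
        have hne : ((-(k:ℤ) - 1 : ℤ) : ℂ) + 1 ≠ 0 := by
          push_cast
          have : ((k:ℤ):ℂ) ≠ 0 := by exact_mod_cast (by omega : (k:ℤ) ≠ 0)
          intro hc
          exact this (by linear_combination -hc)
        rw [show -(k:ℤ) - 1 + 1 = -(k:ℤ) by ring, ih, mul_zero] at this
        have := (mul_eq_zero.mp this).resolve_left hne
        simpa using this
  intro m
  have := z m
  simp only [hf] at this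
  linear_combination this
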